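/- Let V(x, y) = max(|x|, |y|)^{−α} for (x,y) near (0,0) in ℝ² \ {(0,0)}, with α = 1/20, and let Φ₁ be the random map obtained by applying f₁^{τ₁} then f₂^{τ₂} with τ₁, τ₂ independent uniform on [0, T]. For T ≥ 5·10⁵ there exist r₀ > 0 and c = 1 − 10⁻⁴ < 1 such that E[V(Φ₁(x,y))] ≤ c·V(x,y) for all (x,y) ∈ [−r₀, r₀]² \ {(0,0)}. -/

import Mathlib

open Real MeasureTheory

/-- The Lyapunov function `V(x,y) = max(|x|,|y|)^{-1/20}` blowing up at the fixed point `(0,0)`. -/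
noncomputable def Vdrift (p : ℝ × ℝ) : ℝ := (max |p.1| |p.2|) ^ (-(1/20 : ℝ))

/-- One step of the random chain: apply `f₁^{τ₁}` then `f₂^{τ₂}` (in local coordinates near the
fixed point `(0,0)`). -/
noncomputable def oneStep (τ : ℝ × ℝ) (p : ℝ × ℝ) : ℝ × ℝ :=
  (p.1 + τ.1 * Real.sin p.2, p.2 + τ.2 * Real.sin (p.1 + τ.1 * Real.sin p.2))

open intervalIntegral


namespace DriftAux
noncomputable def Cd : ℝ := 2 ^ ((1:ℝ)/20) * (20/19)

noncomputable def phi (u : ℝ) : ℝ := |u| ^ (-(1/20 : ℝ))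

lemma phi_nonneg (u : ℝ) : 0 ≤ phi u := Real.rpow_nonneg (abs_nonneg u) _

lemma phi_even (u : ℝ) : phi (-u) = phi u := by simp [phi]

lemma phi_eq (u : ℝ) : phi u = if u = 0 then 0 else Real.exp (Real.log |u| * (-(1/20 : ℝ))) := by
  rcases eq_or_ne u 0 with rfl | hu
  · simp [phi, Real.zero_rpow (by norm_num : (-(1/20:ℝ)) ≠ 0)]
  · rw [phi, Real.rpow_def_of_pos (abs_pos.2 hu), if_neg hu]

lemma measurable_phi : Measurable phi := by
  have : phi = fun u => if u = 0 then 0 else Real.exp (Real.log |u| * (-(1/20 : ℝ))) :=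
    funext phi_eq
  rw [this]
  exact Measurable.ite (measurableSet_eq_fun measurable_id measurable_const)
    measurable_const
    (((Real.measurable_log.comp measurable_abs).mul_const _).exp)

lemma phi_le {a b : ℝ} (ha : 0 < a) (hab : a ≤ |b|) : phi b ≤ a ^ (-(1/20 : ℝ)) :=
  Real.rpow_le_rpow_of_nonpos ha hab (by norm_num)

lemma power_mean {x y : ℝ} (hx : 0 ≤ x) (hy : 0 ≤ y) :
    x ^ ((19:ℝ)/20) + y ^ ((19:ℝ)/20) ≤ 2 ^ ((1:ℝ)/20) * (x + y) ^ ((19:ℝ)/20) := by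
  have h := Real.arith_mean_le_rpow_mean (Finset.univ : Finset (Fin 2))
      ![1/2, 1/2] ![x ^ ((19:ℝ)/20), y ^ ((19:ℝ)/20)]
      (by intro i _; fin_cases i <;> norm_num)
      (by norm_num [Fin.sum_univ_succ])
      (by intro i _; fin_cases i <;> simp [Real.rpow_nonneg, hx, hy])
      (p := 20/19) (by norm_num)
  simp only [Fin.sum_univ_succ, Fin.sum_univ_zero, Matrix.cons_val_zero, Matrix.cons_val_one,
    Matrix.head_cons, add_zero, Fin.succ_zero_eq_one] at h
  have hxp : (x ^ ((19:ℝ)/20)) ^ ((20:ℝ)/19) = x := by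
    rw [← Real.rpow_mul hx]; norm_num
  have hyp : (y ^ ((19:ℝ)/20)) ^ ((20:ℝ)/19) = y := by
    rw [← Real.rpow_mul hy]; norm_num
  rw [hxp, hyp] at h
  have h2 : (1:ℝ) / (20/19) = 19/20 := by norm_num
  rw [h2] at h
  have key : ((1:ℝ)/2 * x + 1/2 * y) ^ ((19:ℝ)/20) = (x+y) ^ ((19:ℝ)/20) / 2 ^ ((19:ℝ)/20) := by
    have : (1:ℝ)/2 * x + 1/2 * y = (x + y)/2 := by ring
    rw [this, Real.div_rpow (by linarith) (by norm_num)]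
  rw [key] at h
  have h3 : (2:ℝ) ^ ((19:ℝ)/20) > 0 := Real.rpow_pos_of_pos two_pos _
  have h4 : x ^ ((19:ℝ)/20) + y ^ ((19:ℝ)/20) ≤ 2 / 2 ^ ((19:ℝ)/20) * (x+y) ^ ((19:ℝ)/20) := by
    rw [div_mul_eq_mul_div, le_div_iff₀ h3]
    calc (x ^ ((19:ℝ)/20) + y ^ ((19:ℝ)/20)) * 2 ^ ((19:ℝ)/20)
        = (1/2 * x ^ ((19:ℝ)/20) + 1/2 * y ^ ((19:ℝ)/20)) * 2 ^ ((19:ℝ)/20) * 2 := by ring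
      _ ≤ ((x+y) ^ ((19:ℝ)/20) / 2 ^ ((19:ℝ)/20)) * 2 ^ ((19:ℝ)/20) * 2 := by
          have := mul_le_mul_of_nonneg_right (mul_le_mul_of_nonneg_right h h3.le) (by norm_num : (0:ℝ) ≤ 2)
          linarith
      _ = 2 * (x+y) ^ ((19:ℝ)/20) := by field_simp
  have h5 : (2:ℝ) / 2 ^ ((19:ℝ)/20) = 2 ^ ((1:ℝ)/20) := by
    rw [div_eq_iff h3.ne', ← Real.rpow_add two_pos]
    norm_num
  rw [h5] at h4
  exact h4


lemma rpow_subadd {x y : ℝ} (hx : 0 ≤ x) (hy : 0 ≤ y) :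
    (x + y) ^ ((19:ℝ)/20) ≤ x ^ ((19:ℝ)/20) + y ^ ((19:ℝ)/20) := by
  have h := NNReal.rpow_add_le_add_rpow (x.toNNReal) (y.toNNReal)
    (by norm_num : (0:ℝ) ≤ 19/20) (by norm_num : ((19:ℝ)/20) ≤ 1)
  have h2 := NNReal.coe_le_coe.2 h
  push_cast [← Real.toNNReal_add hx hy] at h2
  rwa [Real.coe_toNNReal _ (by linarith), Real.coe_toNNReal _ hx, Real.coe_toNNReal _ hy] at h2

lemma phi_intInt_nonneg {c : ℝ} (hc : 0 ≤ c) : IntervalIntegrable phi volume 0 c := by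
  rw [intervalIntegrable_iff, Set.uIoc_of_le hc]
  have h := intervalIntegral.intervalIntegrable_rpow' (a := 0) (b := c)
    (r := -(1/20:ℝ)) (by norm_num)
  rw [intervalIntegrable_iff, Set.uIoc_of_le hc] at h
  exact h.congr_fun (fun x hx => by rw [phi, abs_of_pos hx.1]) measurableSet_Ioc

lemma phi_intInt (a b : ℝ) : IntervalIntegrable phi volume a b := by
  have h0 : ∀ c : ℝ, IntervalIntegrable phi volume 0 c := by
    intro c
    rcases le_or_gt 0 c with hc | hc
    · exact phi_intInt_nonneg hc
    · have h1 := phi_intInt_nonneg (by linarith : (0:ℝ) ≤ -c)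
      have h2 := (IntervalIntegrable.iff_comp_neg (a := 0) (b := -c) (f := phi)).mp h1
      have h3 : (fun x : ℝ => phi (-x)) = phi := funext phi_even
      rw [h3, neg_zero, neg_neg] at h2
      exact h2
  exact (h0 a).symm.trans (h0 b)

lemma phi_affine_intInt (a s x y : ℝ) : IntervalIntegrable (fun τ => phi (a + τ * s)) volume x y := by
  rcases eq_or_ne s 0 with rfl | hs
  · simp only [mul_zero, add_zero]; exact intervalIntegrable_const
  · have h1 := (phi_intInt (s*x + a) (s*y + a)).comp_add_right a
    have h2 := h1.comp_mul_left (c := s)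
    simp only [add_sub_cancel_right] at h2
    rw [mul_comm s x, mul_div_assoc, div_self hs, mul_one,
        mul_comm s y, mul_div_assoc, div_self hs, mul_one] at h2
    have h3 : (fun τ => phi (s * τ + a)) = (fun τ => phi (a + τ * s)) := by
      funext τ; ring_nf
    rwa [h3] at h2

lemma phi_affine_integrableOn (a s T : ℝ) :
    IntegrableOn (fun τ => phi (a + τ * s)) (Set.Icc 0 T) volume := by
  rcases le_or_gt 0 T with hT | hT
  · rw [integrableOn_Icc_iff_integrableOn_Ioc]
    have h := phi_affine_intInt a s 0 T
    rwa [intervalIntegrable_iff, Set.uIoc_of_le hT] at h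
  · rw [Set.Icc_eq_empty (by linarith)]; exact integrableOn_empty

-- core interval bound, one-signed case
lemma intCa {b c : ℝ} (hb : 0 ≤ b) (hbc : b ≤ c) :
    ∫ u in b..c, phi u ≤ (20/19) * (c - b) ^ ((19:ℝ)/20) := by
  have hcong : ∫ u in b..c, phi u = ∫ u in b..c, u ^ (-(1/20:ℝ)) := by
    apply intervalIntegral.integral_congr
    intro x hx
    rw [Set.uIcc_of_le hbc] at hx
    rcases eq_or_lt_of_le (hb.trans hx.1) with h0 | h0
    · rw [phi, ← h0, abs_zero]
    · rw [phi, abs_of_pos h0]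
  rw [hcong, integral_rpow (Or.inl (by norm_num))]
  have e1 : (-(1/20:ℝ) + 1) = 19/20 := by norm_num
  rw [e1]
  have h2 : c ^ ((19:ℝ)/20) - b ^ ((19:ℝ)/20) ≤ (c - b) ^ ((19:ℝ)/20) := by
    have h3 := rpow_subadd hb (by linarith : (0:ℝ) ≤ c - b)
    rw [add_sub_cancel] at h3
    linarith
  rw [div_le_iff₀ (by norm_num : (0:ℝ) < 19/20)]
  calc c ^ ((19:ℝ)/20) - b ^ ((19:ℝ)/20) ≤ (c - b) ^ ((19:ℝ)/20) := h2
    _ ≤ 20/19 * (c - b) ^ ((19:ℝ)/20) * (19/20) := by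
        rw [mul_comm (20/19 : ℝ), mul_assoc]; norm_num

lemma two_rpow_ge_one : (1:ℝ) ≤ 2 ^ ((1:ℝ)/20) := by
  have := Real.rpow_le_rpow_of_exponent_le (by norm_num : (1:ℝ) ≤ 2)
    (by norm_num : (0:ℝ) ≤ 1/20)
  rwa [Real.rpow_zero] at this

lemma Cd_pos : 0 < Cd :=
  mul_pos (Real.rpow_pos_of_pos two_pos _) (by norm_num)

lemma intCb {b c : ℝ} (hc : c ≤ 0) (hbc : b ≤ c) :
    ∫ u in b..c, phi u ≤ (20/19) * (c - b) ^ ((19:ℝ)/20) := by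
  have h := intervalIntegral.integral_comp_neg (a := -c) (b := -b) phi
  have h2 : (fun x : ℝ => phi (-x)) = phi := funext phi_even
  rw [h2, neg_neg, neg_neg] at h
  rw [← h]
  have := intCa (by linarith : (0:ℝ) ≤ -c) (by linarith : -c ≤ -b)
  calc ∫ u in -c..-b, phi u ≤ (20/19) * (-b - -c) ^ ((19:ℝ)/20) := this
    _ = (20/19) * (c - b) ^ ((19:ℝ)/20) := by ring_nf

lemma intC {b c : ℝ} (hbc : b ≤ c) :
    ∫ u in b..c, phi u ≤ Cd * (c - b) ^ ((19:ℝ)/20) := by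
  have hpow : (0:ℝ) ≤ (c - b) ^ ((19:ℝ)/20) := Real.rpow_nonneg (by linarith) _
  have hCd : (20/19 : ℝ) * (c - b) ^ ((19:ℝ)/20) ≤ Cd * (c - b) ^ ((19:ℝ)/20) := by
    apply mul_le_mul_of_nonneg_right _ hpow
    rw [Cd]; nlinarith [two_rpow_ge_one]
  rcases le_or_gt 0 b with hb | hb
  · exact (intCa hb hbc).trans hCd
  rcases le_or_gt c 0 with hc | hc
  · exact (intCb hc hbc).trans hCd
  · rw [← intervalIntegral.integral_add_adjacent_intervals (phi_intInt b 0) (phi_intInt 0 c)]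
    have h1 := intCb le_rfl hb.le
    have h2 := intCa le_rfl hc.le
    have h3 := power_mean (by linarith : (0:ℝ) ≤ -b) (by linarith : (0:ℝ) ≤ c)
    have e : -b + c = c - b := by ring
    rw [e] at h3
    have e1 : (0:ℝ) - b = -b := by ring
    have e2 : c - 0 = c := by ring
    rw [e1] at h1; rw [e2] at h2
    calc (∫ u in b..0, phi u) + ∫ u in (0:ℝ)..c, phi u
        ≤ (20/19) * (-b) ^ ((19:ℝ)/20) + (20/19) * c ^ ((19:ℝ)/20) := by linarith
      _ = (20/19) * ((-b) ^ ((19:ℝ)/20) + c ^ ((19:ℝ)/20)) := by ring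
      _ ≤ (20/19) * (2 ^ ((1:ℝ)/20) * (c - b) ^ ((19:ℝ)/20)) := by nlinarith
      _ = Cd * (c - b) ^ ((19:ℝ)/20) := by rw [Cd]; ring

lemma intB_pos {a s T : ℝ} (hs : 0 < s) (hT : 0 ≤ T) :
    ∫ τ in Set.Icc 0 T, phi (a + τ * s) ≤ Cd * T ^ ((19:ℝ)/20) * s ^ (-(1/20:ℝ)) := by
  have e0 : (fun τ : ℝ => phi (a + τ * s)) = (fun τ => phi (s * τ + a)) := by
    funext τ; ring_nf
  rw [MeasureTheory.integral_Icc_eq_integral_Ioc,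
      ← intervalIntegral.integral_of_le hT, e0,
      intervalIntegral.integral_comp_mul_add phi hs.ne' a]
  simp only [mul_zero, zero_add, smul_eq_mul]
  have hb : a ≤ s * T + a := by nlinarith
  have h1 := intC hb
  have e1 : s * T + a - a = s * T := by ring
  rw [e1] at h1
  have h2 : s⁻¹ * ∫ u in a..(s*T+a), phi u ≤ s⁻¹ * (Cd * (s*T) ^ ((19:ℝ)/20)) :=
    mul_le_mul_of_nonneg_left h1 (by positivity)
  apply h2.trans
  rw [Real.mul_rpow hs.le hT]
  have e2 : s⁻¹ * (Cd * (s ^ ((19:ℝ)/20) * T ^ ((19:ℝ)/20)))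
      = Cd * T ^ ((19:ℝ)/20) * (s ^ ((19:ℝ)/20) * s⁻¹) := by ring
  rw [e2]
  have e3 : s ^ ((19:ℝ)/20) * s⁻¹ = s ^ (-(1/20:ℝ)) := by
    rw [← Real.rpow_neg_one s, ← Real.rpow_add hs]
    norm_num
  rw [e3]

lemma intB {a s T : ℝ} (hs : s ≠ 0) (hT : 0 ≤ T) :
    ∫ τ in Set.Icc 0 T, phi (a + τ * s) ≤ Cd * T ^ ((19:ℝ)/20) * |s| ^ (-(1/20:ℝ)) := by
  rcases hs.lt_or_gt with h | h
  · have e : (fun τ : ℝ => phi (a + τ * s)) = (fun τ => phi (-a + τ * (-s))) := by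
      funext τ
      rw [← phi_even (a + τ * s)]
      ring_nf
    calc ∫ τ in Set.Icc 0 T, phi (a + τ * s)
        = ∫ τ in Set.Icc 0 T, phi (-a + τ * (-s)) := by rw [e]
      _ ≤ Cd * T ^ ((19:ℝ)/20) * (-s) ^ (-(1/20:ℝ)) := intB_pos (by linarith) hT
      _ = Cd * T ^ ((19:ℝ)/20) * |s| ^ (-(1/20:ℝ)) := by rw [abs_of_neg h]
  · have := intB_pos (a := a) h hT
    rwa [abs_of_pos h]

-- numeric helper
lemma numN {C Q M r : ℝ} (hC : 0 ≤ C) (hr : 0 < r) (hQ : 0 < Q) (hM : Q * r ≤ M)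
    (h20 : C ^ (20:ℕ) ≤ (1 - 1/10^4 : ℝ)^(20:ℕ) * Q) :
    C * M ^ (-(1/20:ℝ)) ≤ (1 - 1/10^4) * r ^ (-(1/20:ℝ)) := by
  have hc : (0:ℝ) < 1 - 1/10^4 := by norm_num
  have hQr : 0 < Q * r := mul_pos hQ hr
  have hM0 : 0 < M := lt_of_lt_of_le hQr hM
  have h1 : M ^ (-(1/20:ℝ)) ≤ (Q * r) ^ (-(1/20:ℝ)) :=
    Real.rpow_le_rpow_of_nonpos hQr hM (by norm_num)
  have h2 : (Q * r) ^ (-(1/20:ℝ)) = Q ^ (-(1/20:ℝ)) * r ^ (-(1/20:ℝ)) :=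
    Real.mul_rpow hQ.le hr.le
  have hCle : C ≤ (1 - 1/10^4) * Q ^ ((1:ℝ)/20) := by
    have hrhs : (0:ℝ) ≤ (1 - 1/10^4) * Q ^ ((1:ℝ)/20) := by positivity
    have hpow : ((1 - 1/10^4 : ℝ) * Q ^ ((1:ℝ)/20)) ^ (20:ℕ)
        = (1 - 1/10^4 : ℝ)^(20:ℕ) * Q := by
      rw [mul_pow]
      congr 1
      rw [← Real.rpow_natCast (Q ^ ((1:ℝ)/20)) 20, ← Real.rpow_mul hQ.le]
      norm_num
    have := h20.trans_eq hpow.symm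
    exact (pow_le_pow_iff_left₀ hC hrhs (by norm_num)).mp this
  have hrp : (0:ℝ) ≤ r ^ (-(1/20:ℝ)) := Real.rpow_nonneg hr.le _
  have hQp : (0:ℝ) ≤ Q ^ (-(1/20:ℝ)) := Real.rpow_nonneg hQ.le _
  calc C * M ^ (-(1/20:ℝ)) ≤ C * ((Q*r) ^ (-(1/20:ℝ))) := by
        apply mul_le_mul_of_nonneg_left h1 hC
    _ = C * Q ^ (-(1/20:ℝ)) * r ^ (-(1/20:ℝ)) := by rw [h2]; ring
    _ ≤ ((1 - 1/10^4) * Q ^ ((1:ℝ)/20)) * Q ^ (-(1/20:ℝ)) * r ^ (-(1/20:ℝ)) := by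
        apply mul_le_mul_of_nonneg_right (mul_le_mul_of_nonneg_right hCle hQp) hrp
    _ = (1 - 1/10^4) * (Q ^ ((1:ℝ)/20) * Q ^ (-(1/20:ℝ))) * r ^ (-(1/20:ℝ)) := by ring
    _ = (1 - 1/10^4) * r ^ (-(1/20:ℝ)) := by
        rw [← Real.rpow_add hQ]; norm_num


lemma restrict_singleton_null (T t₀ : ℝ) : (volume.restrict (Set.Icc (0:ℝ) T)) {t₀} = 0 := by
  rw [Measure.restrict_apply (measurableSet_singleton t₀)]
  exact measure_mono_null Set.inter_subset_left Real.volume_singleton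

lemma null_line (T t₀ : ℝ) :
    ((volume.restrict (Set.Icc (0:ℝ) T)).prod (volume.restrict (Set.Icc (0:ℝ) T)))
      {τ : ℝ × ℝ | τ.1 = t₀} = 0 := by
  have e : {τ : ℝ × ℝ | τ.1 = t₀} = ({t₀} : Set ℝ) ×ˢ (Set.univ : Set ℝ) := by
    ext ⟨a, b⟩; simp [Set.mem_prod, eq_comm]
  rw [e, Measure.prod_prod, restrict_singleton_null, zero_mul]

lemma null_curve (T y : ℝ) (c : ℝ → ℝ) (hc : Continuous c)
    (hae : ∀ᵐ a ∂(volume.restrict (Set.Icc (0:ℝ) T)), c a ≠ 0 ∨ y ≠ 0) :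
    ((volume.restrict (Set.Icc (0:ℝ) T)).prod (volume.restrict (Set.Icc (0:ℝ) T)))
      {τ : ℝ × ℝ | y + τ.2 * c τ.1 = 0} = 0 := by
  have hg : Continuous (fun τ : ℝ × ℝ => y + τ.2 * c τ.1) :=
    continuous_const.add (continuous_snd.mul (hc.comp continuous_fst))
  have hmeas : MeasurableSet {τ : ℝ × ℝ | y + τ.2 * c τ.1 = 0} :=
    (isClosed_singleton.preimage hg).measurableSet
  rw [Measure.measure_prod_null hmeas]
  filter_upwards [hae] with a ha
  rcases eq_or_ne (c a) 0 with hca | hca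
  · rcases ha with ha | ha
    · exact absurd hca ha
    · have : (Prod.mk a ⁻¹' {τ : ℝ × ℝ | y + τ.2 * c τ.1 = 0}) = ∅ := by
        ext b; simp only [Set.mem_preimage, Set.mem_setOf_eq, Set.mem_empty_iff_false, iff_false]
        rw [hca]; simpa using ha
      simp [this]
  · have : (Prod.mk a ⁻¹' {τ : ℝ × ℝ | y + τ.2 * c τ.1 = 0}) = {-y / c a} := by
      ext b
      simp only [Set.mem_preimage, Set.mem_setOf_eq, Set.mem_singleton_iff]
      constructor
      · intro hb; field_simp; linarith
      · intro hb; rw [hb]; field_simp; ring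
    simp only [this]
    exact restrict_singleton_null T _

lemma W2 {T : ℝ} (f h : ℝ × ℝ → ℝ) (D : ℝ → ℝ)
    (hf0 : ∀ τ, 0 ≤ f τ)
    (hmeas : Measurable h)
    (hh0 : ∀ τ, 0 ≤ h τ)
    (hfh : ∀ᵐ τ ∂((volume.restrict (Set.Icc (0:ℝ) T)).prod (volume.restrict (Set.Icc (0:ℝ) T))),
        f τ ≤ h τ)
    (hslice : ∀ a, Integrable (fun b => h (a, b)) (volume.restrict (Set.Icc (0:ℝ) T)))
    (hD : Integrable D (volume.restrict (Set.Icc (0:ℝ) T)))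
    (hDb : ∀ᵐ a ∂(volume.restrict (Set.Icc (0:ℝ) T)),
        (∫ b, h (a, b) ∂(volume.restrict (Set.Icc (0:ℝ) T))) ≤ D a) :
    ∫ τ in Set.Icc ((0,0) : ℝ×ℝ) ((T,T) : ℝ×ℝ), f τ
      ≤ ∫ a, D a ∂(volume.restrict (Set.Icc (0:ℝ) T)) := by
  set μT := volume.restrict (Set.Icc (0:ℝ) T) with hμT
  have hrw : (volume : Measure (ℝ×ℝ)).restrict (Set.Icc ((0,0):ℝ×ℝ) ((T,T):ℝ×ℝ))
      = μT.prod μT := by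
    rw [Set.Icc_prod_eq, Measure.volume_eq_prod, Measure.prod_restrict]
  have hstep : (∫ τ in Set.Icc ((0,0) : ℝ×ℝ) ((T,T) : ℝ×ℝ), f τ) = ∫ τ, f τ ∂(μT.prod μT) := by
    rw [← hrw]
  rw [hstep]
  have hAESM : AEStronglyMeasurable h (μT.prod μT) := hmeas.aestronglyMeasurable
  have hint : Integrable h (μT.prod μT) := by
    rw [MeasureTheory.integrable_prod_iff hAESM]
    refine ⟨Filter.Eventually.of_forall hslice, ?_⟩
    apply Integrable.mono' hD (hAESM.norm.integral_prod_right')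
    filter_upwards [hDb] with a ha
    have e : (fun y => ‖h (a, y)‖) = fun y => h (a, y) :=
      funext fun y => norm_of_nonneg (hh0 _)
    rw [e, Real.norm_of_nonneg (integral_nonneg (fun y => hh0 _))]
    exact ha
  calc ∫ τ, f τ ∂(μT.prod μT) ≤ ∫ τ, h τ ∂(μT.prod μT) :=
        integral_mono_of_nonneg (Filter.Eventually.of_forall hf0) hint hfh
    _ = ∫ a, ∫ b, h (a, b) ∂μT ∂μT := MeasureTheory.integral_prod h hint
    _ ≤ ∫ a, D a ∂μT :=
        integral_mono_of_nonneg
          (Filter.Eventually.of_forall (fun a => integral_nonneg (fun b => hh0 _)))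
          hD hDb

lemma sin_half {t : ℝ} (ht : |t| ≤ 1) : |t| ≤ 2 * |Real.sin t| := by
  have key : ∀ u : ℝ, 0 < u → u ≤ 1 → u ≤ 2 * Real.sin u := by
    intro u hu0 hu1
    have h := Real.sin_gt_sub_cube hu0
    have h2 : u^2 ≤ 1 := by nlinarith
    nlinarith
  rcases lt_trichotomy t 0 with h | h | h
  · have h1 := key (-t) (by linarith) (by rwa [abs_of_neg h] at ht)
    rw [Real.sin_neg] at h1
    have hs : Real.sin t < 0 := by nlinarith
    rw [abs_of_neg h, abs_of_neg hs]; linarith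
  · simp [h]
  · have h1 := key t h (by rwa [abs_of_pos h] at ht)
    have hs : 0 < Real.sin t := by nlinarith
    rw [abs_of_pos h, abs_of_pos hs]; linarith
end DriftAux

namespace DriftAux
lemma Cd_pow : Cd ^ (20:ℕ) = 2 * ((20:ℝ)/19) ^ (20:ℕ) := by
  rw [Cd, mul_pow]
  congr 1
  rw [← Real.rpow_natCast (2 ^ ((1:ℝ)/20)) 20, ← Real.rpow_mul (by norm_num : (0:ℝ) ≤ 2)]
  norm_num
end DriftAux

set_option maxHeartbeats 1000000 in
/-- The local Lyapunov–Foster drift condition at the fixed point: for `T ≥ 5·10⁵`, the average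
of `V` after one random step (with the two durations independent uniform on `[0,T]`) contracts
by the factor `c = 1 − 10⁻⁴` on a small punctured square around the origin. -/
theorem drift_condition (T : ℝ) (hT : 5 * 10 ^ 5 ≤ T) :
    ∃ r₀ > (0:ℝ), ∀ p : ℝ × ℝ,
      p ∈ Set.Icc ((-r₀, -r₀) : ℝ × ℝ) ((r₀, r₀) : ℝ × ℝ) → p ≠ 0 →
      (T ^ 2)⁻¹ * (∫ τ in Set.Icc ((0, 0) : ℝ × ℝ) ((T, T) : ℝ × ℝ), Vdrift (oneStep τ p))
        ≤ (1 - 1 / 10 ^ 4) * Vdrift p := by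
  classical
  refine ⟨1/131072, by norm_num, ?_⟩
  rintro ⟨x, y⟩ hp hp0
  have hT0 : (0:ℝ) < T := lt_of_lt_of_le (by norm_num) hT
  have hTnn : (0:ℝ) ≤ T := hT0.le
  haveI hfinM : IsFiniteMeasure (volume.restrict (Set.Icc (0:ℝ) T)) :=
    ⟨by rw [Measure.restrict_apply_univ]; exact measure_Icc_lt_top⟩
  rw [Set.mem_Icc] at hp
  obtain ⟨hp1, hp2⟩ := hp
  obtain ⟨hxlb, hylb⟩ := Prod.mk_le_mk.mp hp1
  obtain ⟨hxub, hyub⟩ := Prod.mk_le_mk.mp hp2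
  set r : ℝ := max |x| |y| with hrdef
  have hxr : |x| ≤ r := le_max_left _ _
  have hyr : |y| ≤ r := le_max_right _ _
  have hx1 : |x| ≤ 1/131072 := abs_le.mpr ⟨hxlb, hxub⟩
  have hy1 : |y| ≤ 1/131072 := abs_le.mpr ⟨hylb, hyub⟩
  have hrr : r ≤ 1/131072 := max_le hx1 hy1
  have hr0 : 0 < r := by
    by_contra hcon
    push_neg at hcon
    have hx0 : x = 0 := abs_eq_zero.mp (le_antisymm (hxr.trans hcon) (abs_nonneg x))
    have hy0 : y = 0 := abs_eq_zero.mp (le_antisymm (hyr.trans hcon) (abs_nonneg y))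
    exact hp0 (by simp [hx0, hy0, Prod.ext_iff])
  have hVeq : Vdrift (x, y) = r ^ (-(1/20:ℝ)) := rfl
  rw [hVeq, inv_mul_le_iff₀ (by positivity : (0:ℝ) < T ^ 2)]
  set s : ℝ := Real.sin y with hsdef
  have hfeq : ∀ τ : ℝ × ℝ, Vdrift (oneStep τ (x, y))
      = (max |x + τ.1 * s| |y + τ.2 * Real.sin (x + τ.1 * s)|) ^ (-(1/20:ℝ)) := fun τ => rfl
  have hf0 : ∀ τ : ℝ × ℝ, 0 ≤ Vdrift (oneStep τ (x, y)) := fun τ =>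
    Real.rpow_nonneg (le_max_of_le_left (abs_nonneg _)) _
  have hfle1 : ∀ τ : ℝ × ℝ, x + τ.1 * s ≠ 0 →
      Vdrift (oneStep τ (x, y)) ≤ DriftAux.phi (x + τ.1 * s) := by
    intro τ hne
    rw [hfeq τ, DriftAux.phi]
    exact Real.rpow_le_rpow_of_nonpos (abs_pos.mpr hne) (le_max_left _ _) (by norm_num)
  have hfle2 : ∀ τ : ℝ × ℝ, y + τ.2 * Real.sin (x + τ.1 * s) ≠ 0 →
      Vdrift (oneStep τ (x, y)) ≤ DriftAux.phi (y + τ.2 * Real.sin (x + τ.1 * s)) := by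
    intro τ hne
    rw [hfeq τ, DriftAux.phi]
    exact Real.rpow_le_rpow_of_nonpos (abs_pos.mpr hne) (le_max_right _ _) (by norm_num)
  have e39 : T ^ ((19:ℝ)/20) * T = T ^ ((39:ℝ)/20) := by
    rw [← Real.rpow_add_one hT0.ne']; norm_num
  have e39' : (T ^ 2) * T ^ (-(1/20:ℝ)) = T ^ ((39:ℝ)/20) := by
    rw [← Real.rpow_natCast T 2, ← Real.rpow_add hT0]; norm_num
  have hCdTnn : (0:ℝ) ≤ DriftAux.Cd * T ^ ((19:ℝ)/20) :=
    mul_nonneg DriftAux.Cd_pos.le (Real.rpow_nonneg hTnn _)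
  rcases le_or_gt (65536 * r) (T * |s|) with hcase | hcase
  -- CASE I : T|sin y| large
  · have hs0 : s ≠ 0 := by
      intro h0
      rw [h0, abs_zero, mul_zero] at hcase
      nlinarith
    have hmeas1 : Measurable fun τ : ℝ × ℝ => DriftAux.phi (x + τ.1 * s) :=
      DriftAux.measurable_phi.comp (measurable_const.add (measurable_fst.mul measurable_const))
    have hsub : {τ : ℝ × ℝ | ¬ Vdrift (oneStep τ (x, y)) ≤ DriftAux.phi (x + τ.1 * s)}
        ⊆ {τ : ℝ × ℝ | τ.1 = -x / s} := by
      intro τ hτ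
      simp only [Set.mem_setOf_eq] at hτ ⊢
      have h0 : x + τ.1 * s = 0 := by
        by_contra hne
        exact hτ (hfle1 τ hne)
      field_simp
      linarith
    have key := DriftAux.W2 (T := T) (fun τ => Vdrift (oneStep τ (x, y)))
      (fun τ => DriftAux.phi (x + τ.1 * s))
      (fun a => T * DriftAux.phi (x + a * s))
      hf0 hmeas1 (fun τ => DriftAux.phi_nonneg _)
      (ae_iff.mpr (measure_mono_null hsub (DriftAux.null_line T (-x/s))))
      (fun a => by
        show Integrable (fun _ : ℝ => DriftAux.phi (x + a * s))
          (volume.restrict (Set.Icc (0:ℝ) T))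
        exact integrable_const _)
      ((DriftAux.phi_affine_integrableOn x s T).const_mul T)
      (Filter.Eventually.of_forall (fun a => by
        show (∫ _b, DriftAux.phi (x + a * s) ∂(volume.restrict (Set.Icc (0:ℝ) T)))
            ≤ T * DriftAux.phi (x + a * s)
        rw [MeasureTheory.integral_const, measureReal_restrict_apply_univ, Real.volume_real_Icc_of_le hTnn, sub_zero,
            smul_eq_mul]))
    have h2 := DriftAux.intB (a := x) hs0 hTnn
    calc ∫ τ in Set.Icc ((0,0):ℝ×ℝ) ((T,T):ℝ×ℝ), Vdrift (oneStep τ (x,y))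
        ≤ ∫ a, T * DriftAux.phi (x + a * s) ∂(volume.restrict (Set.Icc (0:ℝ) T)) := key
      _ = T * ∫ a in Set.Icc (0:ℝ) T, DriftAux.phi (x + a * s) := integral_const_mul T _
      _ ≤ T * (DriftAux.Cd * T ^ ((19:ℝ)/20) * |s| ^ (-(1/20:ℝ))) :=
          mul_le_mul_of_nonneg_left h2 hTnn
      _ = (DriftAux.Cd * (T * |s|) ^ (-(1/20:ℝ))) * T ^ 2 := by
          rw [Real.mul_rpow hTnn (abs_nonneg s)]
          calc T * (DriftAux.Cd * T ^ ((19:ℝ)/20) * |s| ^ (-(1/20:ℝ)))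
              = DriftAux.Cd * |s| ^ (-(1/20:ℝ)) * (T ^ ((19:ℝ)/20) * T) := by ring
            _ = DriftAux.Cd * |s| ^ (-(1/20:ℝ)) * (T ^ 2 * T ^ (-(1/20:ℝ))) := by
                rw [e39, e39']
            _ = DriftAux.Cd * (T ^ (-(1/20:ℝ)) * |s| ^ (-(1/20:ℝ))) * T ^ 2 := by ring
      _ ≤ ((1 - 1/10^4) * r ^ (-(1/20:ℝ))) * T ^ 2 := by
          apply mul_le_mul_of_nonneg_right _ (by positivity)
          refine DriftAux.numN DriftAux.Cd_pos.le hr0 (by norm_num : (0:ℝ) < 65536) hcase ?_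
          rw [DriftAux.Cd_pow]; norm_num
      _ = T ^ 2 * ((1 - 1/10^4) * r ^ (-(1/20:ℝ))) := by ring
  -- CASE II : T|sin y| < 65536 r
  · have hyb : |y| ≤ 2 * |s| := by
      rw [hsdef]
      exact DriftAux.sin_half (hy1.trans (by norm_num))
    have hyr' : |y| < r := by
      nlinarith [mul_le_mul_of_nonneg_left hyb hTnn, abs_nonneg y]
    have hxeq : |x| = r := by
      rcases max_cases |x| |y| with ⟨h1, _⟩ | ⟨h1, _⟩
      · rw [hrdef]; exact h1.symm
      · exfalso; rw [hrdef, h1] at hyr'; exact lt_irrefl _ hyr'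
    have hx'ub : ∀ a ∈ Set.Icc (0:ℝ) T, |x + a * s| ≤ 1 := by
      rintro a ⟨ha0, haT⟩
      have h1 : |x + a * s| ≤ |x| + |a * s| := abs_add_le _ _
      have h2 : |a * s| = a * |s| := by rw [abs_mul, abs_of_nonneg ha0]
      have h3 : a * |s| ≤ T * |s| := mul_le_mul_of_nonneg_right haT (abs_nonneg s)
      nlinarith
    have hcont : Continuous fun a : ℝ => Real.sin (x + a * s) :=
      Real.continuous_sin.comp (continuous_const.add (continuous_id.mul continuous_const))
    have hmeas2 : Measurable fun τ : ℝ×ℝ => DriftAux.phi (y + τ.2 * Real.sin (x + τ.1 * s)) :=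
      DriftAux.measurable_phi.comp (measurable_const.add (measurable_snd.mul
        (Real.measurable_sin.comp (measurable_const.add (measurable_fst.mul measurable_const)))))
    have hslice2 : ∀ a : ℝ, Integrable (fun b => DriftAux.phi (y + b * Real.sin (x + a * s)))
        (volume.restrict (Set.Icc (0:ℝ) T)) := fun a =>
      DriftAux.phi_affine_integrableOn y (Real.sin (x + a * s)) T
    have hsubN : {τ : ℝ×ℝ | ¬ Vdrift (oneStep τ (x,y))
          ≤ DriftAux.phi (y + τ.2 * Real.sin (x + τ.1 * s))}
        ⊆ {τ : ℝ×ℝ | y + τ.2 * Real.sin (x + τ.1 * s) = 0} := by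
      intro τ hτ
      simp only [Set.mem_setOf_eq] at hτ ⊢
      by_contra hne
      exact hτ (hfle2 τ hne)
    rcases le_or_gt (T * |s|) (r/2) with hc2 | hc2
    -- CASE II.1
    · have hx'lb : ∀ a ∈ Set.Icc (0:ℝ) T, r/2 ≤ |x + a * s| := by
        rintro a ⟨ha0, haT⟩
        have h2 : |a * s| = a * |s| := by rw [abs_mul, abs_of_nonneg ha0]
        have h3 : a * |s| ≤ T * |s| := mul_le_mul_of_nonneg_right haT (abs_nonneg s)
        have h4 : |x| ≤ |x + a * s| + |a * s| := by
          calc |x| = |(x + a * s) + (-(a * s))| := by ring_nf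
            _ ≤ |x + a * s| + |(-(a * s))| := abs_add_le _ _
            _ = |x + a * s| + |a * s| := by rw [abs_neg]
        linarith [hxeq]
      have hsinlb : ∀ a ∈ Set.Icc (0:ℝ) T, r/4 ≤ |Real.sin (x + a * s)| := by
        intro a ha
        have h1 := DriftAux.sin_half (hx'ub a ha)
        linarith [hx'lb a ha]
      have hsin0 : ∀ a ∈ Set.Icc (0:ℝ) T, Real.sin (x + a * s) ≠ 0 := by
        intro a ha h0
        have := hsinlb a ha
        rw [h0, abs_zero] at this
        linarith
      have haeN : ((volume.restrict (Set.Icc (0:ℝ) T)).prod (volume.restrict (Set.Icc (0:ℝ) T)))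
          {τ : ℝ×ℝ | y + τ.2 * Real.sin (x + τ.1 * s) = 0} = 0 := by
        apply DriftAux.null_curve T y _ hcont
        filter_upwards [ae_restrict_mem measurableSet_Icc] with a ha
        exact Or.inl (hsin0 a ha)
      have key := DriftAux.W2 (T := T) (fun τ => Vdrift (oneStep τ (x, y)))
        (fun τ => DriftAux.phi (y + τ.2 * Real.sin (x + τ.1 * s)))
        (fun _ => DriftAux.Cd * T ^ ((19:ℝ)/20) * (r/4) ^ (-(1/20:ℝ)))
        hf0 hmeas2 (fun τ => DriftAux.phi_nonneg _)
        (ae_iff.mpr (measure_mono_null hsubN haeN))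
        hslice2
        (integrable_const _)
        (by
          filter_upwards [ae_restrict_mem measurableSet_Icc] with a ha
          show (∫ b in Set.Icc (0:ℝ) T, DriftAux.phi (y + b * Real.sin (x + a * s)))
              ≤ DriftAux.Cd * T ^ ((19:ℝ)/20) * (r/4) ^ (-(1/20:ℝ))
          have h1 := DriftAux.intB (a := y) (hsin0 a ha) hTnn
          apply h1.trans
          apply mul_le_mul_of_nonneg_left _ hCdTnn
          exact Real.rpow_le_rpow_of_nonpos (by positivity) (hsinlb a ha) (by norm_num))
      calc ∫ τ in Set.Icc ((0,0):ℝ×ℝ) ((T,T):ℝ×ℝ), Vdrift (oneStep τ (x,y))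
          ≤ ∫ _a, (DriftAux.Cd * T ^ ((19:ℝ)/20) * (r/4) ^ (-(1/20:ℝ)))
              ∂(volume.restrict (Set.Icc (0:ℝ) T)) := key
        _ = T * (DriftAux.Cd * T ^ ((19:ℝ)/20) * (r/4) ^ (-(1/20:ℝ))) := by
            rw [MeasureTheory.integral_const, measureReal_restrict_apply_univ, Real.volume_real_Icc_of_le hTnn,
                sub_zero, smul_eq_mul]
        _ = (DriftAux.Cd * (T * (r/4)) ^ (-(1/20:ℝ))) * T ^ 2 := by
            rw [Real.mul_rpow hTnn (by positivity : (0:ℝ) ≤ r/4)]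
            calc T * (DriftAux.Cd * T ^ ((19:ℝ)/20) * (r/4) ^ (-(1/20:ℝ)))
                = DriftAux.Cd * (r/4) ^ (-(1/20:ℝ)) * (T ^ ((19:ℝ)/20) * T) := by ring
              _ = DriftAux.Cd * (r/4) ^ (-(1/20:ℝ)) * (T ^ 2 * T ^ (-(1/20:ℝ))) := by
                  rw [e39, e39']
              _ = DriftAux.Cd * (T ^ (-(1/20:ℝ)) * (r/4) ^ (-(1/20:ℝ))) * T ^ 2 := by ring
        _ ≤ ((1 - 1/10^4) * r ^ (-(1/20:ℝ))) * T ^ 2 := by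
            apply mul_le_mul_of_nonneg_right _ (by positivity)
            refine DriftAux.numN DriftAux.Cd_pos.le hr0
              (by linarith : (0:ℝ) < T/4) (le_of_eq (by ring)) ?_
            rw [DriftAux.Cd_pow]
            have hbase : 2 * ((20:ℝ)/19) ^ (20:ℕ) ≤ (1 - 1/10^4 : ℝ)^(20:ℕ) * 125000 := by
              norm_num
            have hc20 : (0:ℝ) ≤ (1 - 1/10^4 : ℝ)^(20:ℕ) := by norm_num
            have h125 : (125000:ℝ) ≤ T/4 := by linarith
            calc 2 * ((20:ℝ)/19) ^ (20:ℕ) ≤ (1 - 1/10^4 : ℝ)^(20:ℕ) * 125000 := hbase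
              _ ≤ (1 - 1/10^4 : ℝ)^(20:ℕ) * (T/4) := mul_le_mul_of_nonneg_left h125 hc20
        _ = T ^ 2 * ((1 - 1/10^4) * r ^ (-(1/20:ℝ))) := by ring
    -- CASE II.2
    · have hs0 : s ≠ 0 := by
        intro h0
        rw [h0, abs_zero, mul_zero] at hc2
        nlinarith
      have hy0 : y ≠ 0 := by
        intro h0
        apply hs0
        rw [hsdef, h0, Real.sin_zero]
      have haeN : ((volume.restrict (Set.Icc (0:ℝ) T)).prod (volume.restrict (Set.Icc (0:ℝ) T)))
          {τ : ℝ×ℝ | y + τ.2 * Real.sin (x + τ.1 * s) = 0} = 0 :=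
        DriftAux.null_curve T y _ hcont (Filter.Eventually.of_forall fun a => Or.inr hy0)
      have haeX : ∀ᵐ a ∂(volume.restrict (Set.Icc (0:ℝ) T)), x + a * s ≠ 0 := by
        refine ae_iff.mpr (measure_mono_null ?_ (DriftAux.restrict_singleton_null T (-x/s)))
        intro a ha
        simp only [Set.mem_setOf_eq, not_not] at ha
        simp only [Set.mem_singleton_iff]
        field_simp
        linarith
      have key := DriftAux.W2 (T := T) (fun τ => Vdrift (oneStep τ (x, y)))
        (fun τ => DriftAux.phi (y + τ.2 * Real.sin (x + τ.1 * s)))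
        (fun a => (DriftAux.Cd * T ^ ((19:ℝ)/20) * 2 ^ ((1:ℝ)/20)) * DriftAux.phi (x + a * s))
        hf0 hmeas2 (fun τ => DriftAux.phi_nonneg _)
        (ae_iff.mpr (measure_mono_null hsubN haeN))
        hslice2
        ((DriftAux.phi_affine_integrableOn x s T).const_mul _)
        (by
          filter_upwards [ae_restrict_mem measurableSet_Icc, haeX] with a ha hax
          show (∫ b in Set.Icc (0:ℝ) T, DriftAux.phi (y + b * Real.sin (x + a * s)))
              ≤ (DriftAux.Cd * T ^ ((19:ℝ)/20) * 2 ^ ((1:ℝ)/20)) * DriftAux.phi (x + a * s)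
          have hxa1 : |x + a * s| ≤ 1 := hx'ub a ha
          have hhalf := DriftAux.sin_half hxa1
          have hxapos : 0 < |x + a * s| := abs_pos.mpr hax
          have hsins0 : Real.sin (x + a * s) ≠ 0 := by
            intro h0
            rw [h0, abs_zero] at hhalf
            nlinarith
          have h1 := DriftAux.intB (a := y) hsins0 hTnn
          apply h1.trans
          have h2 : |Real.sin (x + a * s)| ^ (-(1/20:ℝ)) ≤ (|x + a * s| / 2) ^ (-(1/20:ℝ)) :=
            Real.rpow_le_rpow_of_nonpos (by positivity) (by linarith) (by norm_num)
          have h3 : (|x + a * s| / 2) ^ (-(1/20:ℝ)) = 2 ^ ((1:ℝ)/20) * DriftAux.phi (x + a * s) := by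
            rw [Real.div_rpow (abs_nonneg _) (by norm_num : (0:ℝ) ≤ 2), DriftAux.phi,
                div_eq_mul_inv, ← Real.rpow_neg (by norm_num : (0:ℝ) ≤ 2), neg_neg, mul_comm]
          calc DriftAux.Cd * T ^ ((19:ℝ)/20) * |Real.sin (x + a * s)| ^ (-(1/20:ℝ))
              ≤ DriftAux.Cd * T ^ ((19:ℝ)/20) * ((|x + a * s| / 2) ^ (-(1/20:ℝ))) :=
                mul_le_mul_of_nonneg_left h2 hCdTnn
            _ = (DriftAux.Cd * T ^ ((19:ℝ)/20) * 2 ^ ((1:ℝ)/20)) * DriftAux.phi (x + a * s) := by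
                rw [h3]; ring)
      have h4 := DriftAux.intB (a := x) hs0 hTnn
      have hC0nn : (0:ℝ) ≤ DriftAux.Cd * T ^ ((19:ℝ)/20) * 2 ^ ((1:ℝ)/20) := by
        apply mul_nonneg hCdTnn
        positivity
      have e2a : ((T:ℝ) ^ 2) ^ (-(1/20:ℝ)) * T ^ 2 = T ^ ((19:ℝ)/20) * T ^ ((19:ℝ)/20) := by
        rw [← Real.rpow_natCast T 2, ← Real.rpow_mul hTnn, ← Real.rpow_add hT0,
            ← Real.rpow_add hT0]
        norm_num
      calc ∫ τ in Set.Icc ((0,0):ℝ×ℝ) ((T,T):ℝ×ℝ), Vdrift (oneStep τ (x,y))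
          ≤ ∫ a, (DriftAux.Cd * T ^ ((19:ℝ)/20) * 2 ^ ((1:ℝ)/20)) * DriftAux.phi (x + a * s)
              ∂(volume.restrict (Set.Icc (0:ℝ) T)) := key
        _ = (DriftAux.Cd * T ^ ((19:ℝ)/20) * 2 ^ ((1:ℝ)/20))
              * ∫ a in Set.Icc (0:ℝ) T, DriftAux.phi (x + a * s) := integral_const_mul _ _
        _ ≤ (DriftAux.Cd * T ^ ((19:ℝ)/20) * 2 ^ ((1:ℝ)/20))
              * (DriftAux.Cd * T ^ ((19:ℝ)/20) * |s| ^ (-(1/20:ℝ))) :=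
            mul_le_mul_of_nonneg_left h4 hC0nn
        _ = ((DriftAux.Cd ^ 2 * 2 ^ ((1:ℝ)/20)) * (T ^ 2 * |s|) ^ (-(1/20:ℝ))) * T ^ 2 := by
            rw [Real.mul_rpow (by positivity : (0:ℝ) ≤ (T:ℝ)^2) (abs_nonneg s)]
            calc (DriftAux.Cd * T ^ ((19:ℝ)/20) * 2 ^ ((1:ℝ)/20))
                  * (DriftAux.Cd * T ^ ((19:ℝ)/20) * |s| ^ (-(1/20:ℝ)))
                = (DriftAux.Cd ^ 2 * 2 ^ ((1:ℝ)/20)) * |s| ^ (-(1/20:ℝ))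
                    * (T ^ ((19:ℝ)/20) * T ^ ((19:ℝ)/20)) := by ring
              _ = (DriftAux.Cd ^ 2 * 2 ^ ((1:ℝ)/20)) * |s| ^ (-(1/20:ℝ))
                    * (((T:ℝ) ^ 2) ^ (-(1/20:ℝ)) * T ^ 2) := by rw [e2a]
              _ = (DriftAux.Cd ^ 2 * 2 ^ ((1:ℝ)/20))
                    * (((T:ℝ) ^ 2) ^ (-(1/20:ℝ)) * |s| ^ (-(1/20:ℝ))) * T ^ 2 := by ring
        _ ≤ ((1 - 1/10^4) * r ^ (-(1/20:ℝ))) * T ^ 2 := by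
            apply mul_le_mul_of_nonneg_right _ (by positivity)
            refine DriftAux.numN (by positivity) hr0 (by linarith : (0:ℝ) < T/2) ?_ ?_
            · nlinarith [mul_le_mul_of_nonneg_left hc2.le hTnn, pow_two T]
            · have h2pow : ((2:ℝ) ^ ((1:ℝ)/20)) ^ (20:ℕ) = 2 := by
                rw [← Real.rpow_natCast (2 ^ ((1:ℝ)/20)) 20,
                    ← Real.rpow_mul (by norm_num : (0:ℝ) ≤ 2)]
                norm_num
              have hpow : ((DriftAux.Cd ^ 2 * 2 ^ ((1:ℝ)/20)) ^ (20:ℕ) : ℝ)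
                  = (DriftAux.Cd ^ (20:ℕ)) ^ 2 * 2 := by
                rw [mul_pow, h2pow, ← pow_mul, ← pow_mul]
              rw [hpow, DriftAux.Cd_pow]
              have hbase : ((2:ℝ) * ((20:ℝ)/19) ^ (20:ℕ)) ^ 2 * 2
                  ≤ (1 - 1/10^4 : ℝ)^(20:ℕ) * 250000 := by norm_num
              have hc20 : (0:ℝ) ≤ (1 - 1/10^4 : ℝ)^(20:ℕ) := by norm_num
              have h250 : (250000:ℝ) ≤ T/2 := by linarith
              calc ((2:ℝ) * ((20:ℝ)/19) ^ (20:ℕ)) ^ 2 * 2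
                  ≤ (1 - 1/10^4 : ℝ)^(20:ℕ) * 250000 := hbase
                _ ≤ (1 - 1/10^4 : ℝ)^(20:ℕ) * (T/2) := mul_le_mul_of_nonneg_left h250 hc20
        _ = T ^ 2 * ((1 - 1/10^4) * r ^ (-(1/20:ℝ))) := by ring
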